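/- Quantitative Laplace principle: Let f ∈ P(ℝ^d) with u* ∈ supp(f) and let L satisfy λ_min|u−u*|² ≤ L(u) − L(u*) ≤ η|u−u*| + λ_max|u−u*|² on the support of f, with λ_min, λ_max > 0, η ≥ 0. Fix α > 0 and ε > 0, and set R = min{ ε² λ_min / (8(λ_max + η)), 1 }. Then |m^α_L[f] − u*| ≤ ε/2 + (e^{−α λ_min (ε/4)²} / f(B_R(u*))) · ∫ |u − u*| f(du). -/

import Mathlib

open MeasureTheory

/-- The support of a measure: points all of whose neighborhoods have positive mass. -/
def measSupport {d : ℕ} (f : Measure (EuclideanSpace ℝ (Fin d))) :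
    Set (EuclideanSpace ℝ (Fin d)) :=
  {x | ∀ r > 0, 0 < f (Metric.ball x r)}

set_option maxHeartbeats 1000000 in
/-- quantitative Laplace principle for the Gibbs-weighted mean. -/
theorem quantitative_laplace_principle
    {d : ℕ} (f : Measure (EuclideanSpace ℝ (Fin d))) [IsProbabilityMeasure f]
    (L : EuclideanSpace ℝ (Fin d) → ℝ) (hLmeas : Measurable L)
    (ustar : EuclideanSpace ℝ (Fin d)) (hsupp : ustar ∈ measSupport f)
    (lmin lmax η : ℝ) (hlmin : 0 < lmin) (hlmax : 0 < lmax) (hη : 0 ≤ η)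
    (hgrow : ∀ u ∈ measSupport f,
      lmin * ‖u - ustar‖ ^ 2 ≤ L u - L ustar ∧
        L u - L ustar ≤ η * ‖u - ustar‖ + lmax * ‖u - ustar‖ ^ 2)
    (α ε : ℝ) (hα : 0 < α) (hε : 0 < ε)
    (R : ℝ) (hR : R = min (ε ^ 2 * lmin / (8 * (lmax + η))) 1)
    (hint₁ : Integrable (fun u => Real.exp (-α * L u)) f)
    (hint₂ : Integrable (fun u => Real.exp (-α * L u) • u) f)
    (hint₃ : Integrable (fun u => ‖u - ustar‖) f) :
    ‖((∫ u, Real.exp (-α * L u) ∂f)⁻¹ • ∫ u, Real.exp (-α * L u) • u ∂f) - ustar‖ ≤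
      ε / 2 +
        Real.exp (-α * lmin * (ε / 4) ^ 2) / (f (Metric.closedBall ustar R)).toReal *
          ∫ u, ‖u - ustar‖ ∂f := by
  set w : EuclideanSpace ℝ (Fin d) → ℝ := fun u => Real.exp (-α * L u) with hwdef
  have hwpos : ∀ u, 0 < w u := fun u => Real.exp_pos _
  have hwnn : ∀ u, 0 ≤ w u := fun u => (hwpos u).le
  -- a.e. every point is in the support
  have hae : ∀ᵐ u ∂f, u ∈ measSupport f := by
    rw [ae_iff]
    refine measure_null_of_locally_null _ (fun x hx => ?_)
    have hx' : ¬ ∀ r > 0, 0 < f (Metric.ball x r) := hx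
    push_neg at hx'
    obtain ⟨r, hr, hr0⟩ := hx'
    exact ⟨Metric.ball x r, nhdsWithin_le_nhds (Metric.ball_mem_nhds x hr),
      le_antisymm hr0 (zero_le)⟩
  -- positivity of the normalizing constant
  have hZpos : 0 < ∫ u, w u ∂f := by
    rw [integral_pos_iff_support_of_nonneg hwnn hint₁]
    have hsup : Function.support w = Set.univ := Set.eq_univ_of_forall fun u => (hwpos u).ne'
    rw [hsup]
    simp
  have hZ0 : (∫ u, w u ∂f) ≠ 0 := ne_of_gt hZpos
  -- R and the ball mass
  have hRpos : 0 < R := by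
    rw [hR]; exact lt_min (by positivity) one_pos
  set S := Metric.closedBall ustar R with hSdef
  set P := (f S).toReal with hPdef
  have hfS : 0 < f S :=
    lt_of_lt_of_le (hsupp R hRpos) (measure_mono Metric.ball_subset_closedBall)
  have hPpos : 0 < P := ENNReal.toReal_pos (ne_of_gt hfS) (measure_ne_top f S)
  -- lower bound for Z
  set c0 : ℝ := Real.exp (-α * (L ustar + lmin * ε ^ 2 / 8)) with hc0def
  have hc0pos : 0 < c0 := Real.exp_pos _
  have hR1 : R ≤ 1 := by rw [hR]; exact min_le_right _ _
  have hR2 : (lmax + η) * R ≤ lmin * ε ^ 2 / 8 := by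
    have hm : R ≤ ε ^ 2 * lmin / (8 * (lmax + η)) := by
      rw [hR]; exact min_le_left _ _
    rw [le_div_iff₀ (by positivity)] at hm
    nlinarith
  have hZlow : c0 * P ≤ ∫ u, w u ∂f := by
    have h1 : ∫ u in S, (c0 : ℝ) ∂f ≤ ∫ u in S, w u ∂f := by
      refine integral_mono_ae (integrable_const _) hint₁.integrableOn ?_
      filter_upwards [ae_restrict_of_ae hae, ae_restrict_mem measurableSet_closedBall]
        with u hu huS
      have hd : ‖u - ustar‖ ≤ R := by
        rw [← dist_eq_norm]; exact Metric.mem_closedBall.1 huS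
      have h2 := (hgrow u hu).2
      have hLle : L u ≤ L ustar + lmin * ε ^ 2 / 8 := by
        nlinarith [mul_le_mul_of_nonneg_left hd hη,
          mul_le_mul_of_nonneg_left (mul_le_mul hd hd (norm_nonneg _) hRpos.le) hlmax.le,
          mul_le_of_le_one_right hRpos.le hR1]
      exact Real.exp_le_exp.2 (by nlinarith)
    have h2 : ∫ u in S, (c0 : ℝ) ∂f = P * c0 := by
      rw [setIntegral_const]; rfl
    have h3 : ∫ u in S, w u ∂f ≤ ∫ u, w u ∂f :=
      setIntegral_le_integral hint₁ (Filter.Eventually.of_forall hwnn)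
    calc c0 * P = P * c0 := mul_comm _ _
      _ ≤ ∫ u in S, w u ∂f := h2 ▸ h1
      _ ≤ ∫ u, w u ∂f := h3
  have hc0P : 0 < c0 * P := mul_pos hc0pos hPpos
  -- integrability of the centered integrand
  have hconv : Integrable (fun u => w u • (u - ustar)) f := by
    have heq : (fun u => w u • (u - ustar))
        = fun u => (Real.exp (-α * L u) • u) - w u • ustar := by
      funext u; rw [smul_sub]
    rw [heq]
    exact hint₂.sub (hint₁.smul_const ustar)
  have hφint : Integrable (fun u => w u * ‖u - ustar‖) f := by
    refine hconv.norm.congr (Filter.Eventually.of_forall fun u => ?_)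
    show ‖w u • (u - ustar)‖ = w u * ‖u - ustar‖
    rw [norm_smul, Real.norm_eq_abs, abs_of_nonneg (hwnn u)]
  -- the key identity
  have hkey : ((∫ u, w u ∂f)⁻¹ • ∫ u, Real.exp (-α * L u) • u ∂f) - ustar
      = (∫ u, w u ∂f)⁻¹ • (∫ u, w u • (u - ustar) ∂f) := by
    have h1 : ∫ u, w u • (u - ustar) ∂f
        = (∫ u, Real.exp (-α * L u) • u ∂f) - (∫ u, w u ∂f) • ustar := by
      have heq : (fun u => w u • (u - ustar))
          = fun u => (Real.exp (-α * L u) • u) - w u • ustar := by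
        funext u; rw [smul_sub]
      rw [heq, integral_sub hint₂ (hint₁.smul_const ustar), integral_smul_const]
    rw [h1, smul_sub, smul_smul, inv_mul_cancel₀ hZ0, one_smul]
  -- norm bound by the weighted first moment
  have hnorm : ‖(∫ u, w u ∂f)⁻¹ • (∫ u, w u • (u - ustar) ∂f)‖
      ≤ (∫ u, w u ∂f)⁻¹ * ∫ u, w u * ‖u - ustar‖ ∂f := by
    rw [norm_smul, Real.norm_eq_abs, abs_of_nonneg (inv_nonneg.2 hZpos.le)]
    refine mul_le_mul_of_nonneg_left ?_ (inv_nonneg.2 hZpos.le)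
    calc ‖∫ u, w u • (u - ustar) ∂f‖ ≤ ∫ u, ‖w u • (u - ustar)‖ ∂f :=
          norm_integral_le_integral_norm _
      _ = ∫ u, w u * ‖u - ustar‖ ∂f := by
          congr 1; funext u
          rw [norm_smul, Real.norm_eq_abs, abs_of_nonneg (hwnn u)]
  -- split into near and far parts
  set A := Metric.closedBall ustar (ε / 2) with hAdef
  have hsplit : ∫ u, w u * ‖u - ustar‖ ∂f
      = (∫ u in A, w u * ‖u - ustar‖ ∂f) + ∫ u in Aᶜ, w u * ‖u - ustar‖ ∂f :=
    (integral_add_compl measurableSet_closedBall hφint).symm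
  have hA_bound : ∫ u in A, w u * ‖u - ustar‖ ∂f ≤ (ε / 2) * ∫ u, w u ∂f := by
    calc ∫ u in A, w u * ‖u - ustar‖ ∂f ≤ ∫ u in A, w u * (ε / 2) ∂f := by
          refine integral_mono_ae hφint.integrableOn (hint₁.integrableOn.mul_const _) ?_
          filter_upwards [ae_restrict_mem measurableSet_closedBall] with u huA
          have hle : ‖u - ustar‖ ≤ ε / 2 := by
            rw [← dist_eq_norm]; exact Metric.mem_closedBall.1 huA
          exact mul_le_mul_of_nonneg_left hle (hwnn u)
      _ = (∫ u in A, w u ∂f) * (ε / 2) := integral_mul_const _ _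
      _ ≤ (∫ u, w u ∂f) * (ε / 2) := by
          refine mul_le_mul_of_nonneg_right ?_ (by positivity)
          exact setIntegral_le_integral hint₁ (Filter.Eventually.of_forall hwnn)
      _ = (ε / 2) * ∫ u, w u ∂f := mul_comm _ _
  set K : ℝ := Real.exp (-α * L ustar - α * (lmin * (ε / 2) ^ 2)) with hKdef
  have hKpos : 0 < K := Real.exp_pos _
  have hInn : 0 ≤ ∫ u, ‖u - ustar‖ ∂f := integral_nonneg fun u => norm_nonneg _
  have hAc_bound : ∫ u in Aᶜ, w u * ‖u - ustar‖ ∂f ≤ K * ∫ u, ‖u - ustar‖ ∂f := by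
    calc ∫ u in Aᶜ, w u * ‖u - ustar‖ ∂f ≤ ∫ u in Aᶜ, K * ‖u - ustar‖ ∂f := by
          refine integral_mono_ae hφint.integrableOn (hint₃.integrableOn.const_mul _) ?_
          filter_upwards [ae_restrict_of_ae hae,
            ae_restrict_mem measurableSet_closedBall.compl] with u hu huA
          have hfar : ε / 2 < ‖u - ustar‖ := by
            rw [← dist_eq_norm]
            by_contra h
            exact huA (Metric.mem_closedBall.2 (not_lt.1 h))
          have hn2 : (ε / 2) ^ 2 ≤ ‖u - ustar‖ ^ 2 :=
            pow_le_pow_left₀ (by positivity) hfar.le 2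
          have hL := (hgrow u hu).1
          have hwK : w u ≤ K := by
            apply Real.exp_le_exp.2
            nlinarith [mul_le_mul_of_nonneg_left hn2 hlmin.le,
              mul_le_mul_of_nonneg_left
                (le_trans (mul_le_mul_of_nonneg_left hn2 hlmin.le) hL) hα.le]
          exact mul_le_mul_of_nonneg_right hwK (norm_nonneg _)
      _ = K * ∫ u in Aᶜ, ‖u - ustar‖ ∂f := integral_const_mul _ _
      _ ≤ K * ∫ u, ‖u - ustar‖ ∂f := by
          refine mul_le_mul_of_nonneg_left ?_ hKpos.le
          exact setIntegral_le_integral hint₃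
            (Filter.Eventually.of_forall fun u => norm_nonneg _)
  -- assemble
  have hc0K : c0⁻¹ * K = Real.exp (-(α * lmin * ε ^ 2) / 8) := by
    rw [hc0def, hKdef, ← Real.exp_neg, ← Real.exp_add]
    congr 1; ring
  have hfinal : (∫ u, w u ∂f)⁻¹ * (K * ∫ u, ‖u - ustar‖ ∂f)
      ≤ Real.exp (-α * lmin * (ε / 4) ^ 2) / P * ∫ u, ‖u - ustar‖ ∂f := by
    have h1 : (∫ u, w u ∂f)⁻¹ ≤ (c0 * P)⁻¹ := by
      exact inv_anti₀ hc0P hZlow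
    calc (∫ u, w u ∂f)⁻¹ * (K * ∫ u, ‖u - ustar‖ ∂f)
        ≤ (c0 * P)⁻¹ * (K * ∫ u, ‖u - ustar‖ ∂f) :=
          mul_le_mul_of_nonneg_right h1 (mul_nonneg hKpos.le hInn)
      _ = (c0⁻¹ * K) / P * ∫ u, ‖u - ustar‖ ∂f := by rw [mul_inv]; ring
      _ = Real.exp (-(α * lmin * ε ^ 2) / 8) / P * ∫ u, ‖u - ustar‖ ∂f := by rw [hc0K]
      _ ≤ Real.exp (-α * lmin * (ε / 4) ^ 2) / P * ∫ u, ‖u - ustar‖ ∂f := by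
          refine mul_le_mul_of_nonneg_right ?_ hInn
          have hexp : Real.exp (-(α * lmin * ε ^ 2) / 8)
              ≤ Real.exp (-α * lmin * (ε / 4) ^ 2) := by
            apply Real.exp_le_exp.2
            nlinarith [mul_pos (mul_pos hα hlmin) (pow_pos hε 2)]
          exact (div_le_div_iff_of_pos_right hPpos).2 hexp
  rw [hkey]
  calc ‖(∫ u, w u ∂f)⁻¹ • (∫ u, w u • (u - ustar) ∂f)‖
      ≤ (∫ u, w u ∂f)⁻¹ * ∫ u, w u * ‖u - ustar‖ ∂f := hnorm
    _ = (∫ u, w u ∂f)⁻¹ *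
        ((∫ u in A, w u * ‖u - ustar‖ ∂f) + ∫ u in Aᶜ, w u * ‖u - ustar‖ ∂f) := by
        rw [hsplit]
    _ ≤ (∫ u, w u ∂f)⁻¹ *
        ((ε / 2) * (∫ u, w u ∂f) + K * ∫ u, ‖u - ustar‖ ∂f) :=
        mul_le_mul_of_nonneg_left (add_le_add hA_bound hAc_bound) (inv_nonneg.2 hZpos.le)
    _ = ε / 2 + (∫ u, w u ∂f)⁻¹ * (K * ∫ u, ‖u - ustar‖ ∂f) := by
        rw [mul_add]
        congr 1
        rw [mul_comm (ε / 2), ← mul_assoc, inv_mul_cancel₀ hZ0, one_mul]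
    _ ≤ ε / 2 + Real.exp (-α * lmin * (ε / 4) ^ 2) / P * ∫ u, ‖u - ustar‖ ∂f :=
        add_le_add le_rfl hfinal
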